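/- Let k be a number field of degree d over ℚ and let y be an m×m matrix with entries in k such that every coefficient of the characteristic polynomial of y is an algebraic integer (i.e. lies in the ring of integers of k). Regard k^m as a ℚ-vector space of dimension d·m and let T : k^m → k^m be the ℚ-linear endomorphism v ↦ y·v. Then the characteristic polynomial of T has integer coefficients, i.e. it is the image of a monic polynomial in ℤ[X]. -/
import Mathlib

open Module Polynomial NumberField Matrix

/-- If `k` is a number field of degree `d` over `ℚ` and `y` is an `m × m` matrix over `k`
all of whose characteristic polynomial coefficients are algebraic integers, then the
characteristic polynomial of the `ℚ`-linear endomorphism `v ↦ y ⬝ v` of `kᵐ` is the image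
of a monic polynomial with integer coefficients. -/
theorem stmt_12 (k : Type) [Field k] [NumberField k] (d m : ℕ)
    (hd : Module.finrank ℚ k = d) (y : Matrix (Fin m) (Fin m) k)
    (hy : ∀ j : ℕ, IsIntegral ℤ (y.charpoly.coeff j)) :
    ∃ q : Polynomial ℤ, q.Monic ∧
      q.map (Int.castRingHom ℚ) = ((Matrix.toLin' y).restrictScalars ℚ).charpoly := by
  classical
  set T : (Fin m → k) →ₗ[ℚ] (Fin m → k) := (Matrix.toLin' y).restrictScalars ℚ with hTdef
  have hT : ∀ x : Fin m → k, T x = y *ᵥ x := fun x => Matrix.toLin'_apply y x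
  -- Cayley–Hamilton
  have hdeg : y.charpoly.natDegree = m := by simpa using y.charpoly_natDegree_eq_dim
  have hCH : y ^ m = -∑ t ∈ Finset.range m, y.charpoly.coeff t • y ^ t := by
    have h0 := y.aeval_self_charpoly
    rw [y.charpoly_monic.as_sum, hdeg] at h0
    simp only [map_add, map_sum, _root_.map_mul, _root_.map_pow, aeval_X, aeval_C, ← Algebra.smul_def] at h0
    exact eq_neg_of_add_eq_zero_left h0
  -- the lattice
  set g : Fin m × Fin m → (Fin m → k) := fun p => (y ^ (p.1 : ℕ)) *ᵥ Pi.single p.2 1 with hgdef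
  set L : Submodule (𝓞 k) (Fin m → k) := Submodule.span _ (Set.range g) with hLdef
  have hgen : ∀ (t : ℕ) (ht : t < m) (i : Fin m), (y ^ t) *ᵥ Pi.single i 1 ∈ L :=
    fun t ht i => Submodule.subset_span ⟨(⟨t, ht⟩, i), rfl⟩
  have hOsmul : ∀ (c : k), IsIntegral ℤ c → ∀ x ∈ L, c • x ∈ L := by
    intro c hc x hx
    have h1 : c • x = (⟨c, hc⟩ : 𝓞 k) • x := (algebraMap_smul k (⟨c, hc⟩ : 𝓞 k) x).symm
    rw [h1]
    exact L.smul_mem _ hx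
  -- stability
  have hstab : ∀ x ∈ L, y *ᵥ x ∈ L := by
    intro x hx
    induction hx using Submodule.span_induction with
    | mem x hxg =>
      obtain ⟨⟨j, i⟩, rfl⟩ := hxg
      show y *ᵥ ((y ^ (j : ℕ)) *ᵥ Pi.single i 1) ∈ L
      rw [Matrix.mulVec_mulVec, ← pow_succ']
      rcases lt_or_eq_of_le (Nat.succ_le_of_lt j.isLt) with h | h
      · exact hgen _ h i
      · have h' : (j : ℕ) + 1 = m := h
        rw [h', hCH, Matrix.neg_mulVec]
        have hsum : (∑ t ∈ Finset.range m, y.charpoly.coeff t • y ^ t) *ᵥ Pi.single i 1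
            = ∑ t ∈ Finset.range m, y.charpoly.coeff t • ((y ^ t) *ᵥ Pi.single i 1) := by
          rw [show ∀ M : Matrix (Fin m) (Fin m) k, M *ᵥ Pi.single i 1 =
              Matrix.mulVec.addMonoidHomLeft (Pi.single i 1) M from fun _ => rfl, map_sum]
          exact Finset.sum_congr rfl fun t _ => by
            show (y.charpoly.coeff t • y ^ t) *ᵥ Pi.single i 1 = _
            rw [Matrix.smul_mulVec]
        rw [hsum]
        exact neg_mem (Submodule.sum_mem _ fun t ht =>
          hOsmul _ (hy t) _ (hgen t (Finset.mem_range.mp ht) i))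
    | zero => simpa using L.zero_mem
    | add a b ha hb iha ihb => rw [Matrix.mulVec_add]; exact L.add_mem iha ihb
    | smul w x hx ih =>
      have h1 : y *ᵥ (w • x) = w • (y *ᵥ x) := by
        rw [← algebraMap_smul k w x, Matrix.mulVec_smul, algebraMap_smul]
      rw [h1]; exact L.smul_mem w ih
  -- finiteness and freeness over ℤ
  have hfgO : Module.Finite (𝓞 k) L :=
    Module.Finite.iff_fg.mpr (Submodule.fg_span (Set.finite_range g))
  have hfinZ : Module.Finite ℤ L := Module.Finite.trans (𝓞 k) L
  have htf : NoZeroSMulDivisors ℤ L := by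
    constructor
    intro c x h
    have h1 : c • (x : Fin m → k) = 0 := by
      have := congrArg (Subtype.val) h
      simpa using this
    rcases smul_eq_zero.mp h1 with h | h
    · exact Or.inl h
    · exact Or.inr (Subtype.ext h)
  have hfree : Module.Free ℤ L := Module.free_of_finite_type_torsion_free'
  set ι := Module.Free.ChooseBasisIndex ℤ L with hιdef
  set b0 : Basis ι ℤ L := Module.Free.chooseBasis ℤ L with hb0def
  set v : ι → (Fin m → k) := fun i => (b0 i : Fin m → k) with hvdef
  set jZ : L →ₗ[ℤ] (Fin m → k) := L.subtype.restrictScalars ℤ with hjZdef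
  have key : ∀ x : L, (x : Fin m → k) = ∑ i, ((b0.repr x i : ℤ) : ℚ) • v i := by
    intro x
    conv_lhs => rw [show ((x : Fin m → k)) = jZ x from rfl, ← b0.sum_repr x]
    rw [map_sum]
    refine Finset.sum_congr rfl fun i _ => ?_
    rw [_root_.map_smul]
    exact (Int.cast_smul_eq_zsmul ℚ _ _).symm
  have hli : LinearIndependent ℚ v := by
    rw [← LinearIndependent.iff_fractionRing ℤ ℚ]
    exact b0.linearIndependent.map' jZ
      (LinearMap.ker_eq_bot.mpr fun a b hab => Subtype.ext hab)
  have hLsub : ∀ x ∈ L, x ∈ Submodule.span ℚ (Set.range v) := by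
    intro x hx
    rw [show x = ((⟨x, hx⟩ : L) : Fin m → k) from rfl, key ⟨x, hx⟩]
    exact Submodule.sum_mem _ fun i _ =>
      Submodule.smul_mem _ _ (Submodule.subset_span ⟨i, rfl⟩)
  have hsingle : ∀ (i : Fin m) (c : k), Pi.single i c ∈ Submodule.span ℚ (Set.range v) := by
    intro i c
    have hO : ∀ w : 𝓞 k, Pi.single i (algebraMap (𝓞 k) k w) ∈ Submodule.span ℚ (Set.range v) := by
      intro w
      refine hLsub _ ?_
      have h1 : Pi.single i (algebraMap (𝓞 k) k w)
          = algebraMap (𝓞 k) k w • ((y ^ (0 : ℕ)) *ᵥ Pi.single i (1 : k)) := by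
        rw [pow_zero, Matrix.one_mulVec]
        ext j
        by_cases h : j = i
        · subst h; simp
        · simp [Pi.single_eq_of_ne h]
      rw [h1, algebraMap_smul]
      exact L.smul_mem w (hgen 0 i.pos i)
    have hmap : Submodule.map (LinearMap.single ℚ (fun _ : Fin m => k) i) ⊤
        ≤ Submodule.span ℚ (Set.range v) := by
      rw [← (NumberField.integralBasis k).span_eq, Submodule.map_span, Submodule.span_le]
      rintro _ ⟨_, ⟨j, rfl⟩, rfl⟩
      simpa [NumberField.integralBasis_apply] using hO (NumberField.RingOfIntegers.basis k j)
    exact hmap ⟨c, trivial, rfl⟩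
  have htop : ⊤ ≤ Submodule.span ℚ (Set.range v) := by
    intro x _
    have hx : x = ∑ i, Pi.single i (x i) := by
      ext j
      simp [Finset.sum_apply, Pi.single_apply]
    rw [hx]
    exact Submodule.sum_mem _ fun i _ => hsingle i (x i)
  set bQ : Basis ι ℚ (Fin m → k) := Basis.mk hli htop with hbQdef
  have hbQ : ∀ i, bQ i = v i := fun i => Basis.mk_apply hli htop i
  have hmem : ∀ s : ι, T (v s) ∈ L := by
    intro s
    rw [hT]
    exact hstab _ (b0 s).2
  set A : Matrix ι ι ℤ := fun r s => b0.repr ⟨T (v s), hmem s⟩ r with hAdef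
  refine ⟨A.charpoly, A.charpoly_monic, ?_⟩
  have hA : (LinearMap.toMatrix bQ bQ T) = A.map ⇑(Int.castRingHom ℚ) := by
    ext r s
    rw [LinearMap.toMatrix_apply, hbQ s]
    have h3 : T (v s) = ∑ i, (fun i => ((b0.repr ⟨T (v s), hmem s⟩ i : ℤ) : ℚ)) i • bQ i := by
      conv_lhs => rw [show T (v s) = ((⟨T (v s), hmem s⟩ : L) : Fin m → k) from rfl,
        key ⟨T (v s), hmem s⟩]
      exact Finset.sum_congr rfl fun i _ => by rw [hbQ]
    rw [h3, bQ.repr_sum_self]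
    rfl
  rw [← LinearMap.charpoly_toMatrix T bQ, hA, Matrix.charpoly_map]
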